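/- There exists a finite matching market instance and a contingent stable matching under absolute priorities μ and another contingent stable matching μ' such that the sets of matched students under μ and μ' have different cardinalities; hence the Rural Hospital Theorem (invariance of the set of matched agents across stable matchings) fails for contingent stability with absolute priorities. -/

import Mathlib

open scoped Classical

/-- A many-to-one matching market with levels, families, priority groups and
random tie-breakers, as in "Stable Matching with Contingent Priorities". -/
structure Market where
  Student : Type
  School : Type
  Level : Type
  [instFinS : Fintype Student]
  [instDecS : DecidableEq Student]
  [instFinC : Fintype School]
  [instDecC : DecidableEq School]
  [instFinL : Fintype Level]
  [instDecL : DecidableEq Level]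
  level : Student → Level
  sameFamily : Student → Student → Prop
  fam_refl : ∀ s, sameFamily s s
  fam_symm : ∀ s s', sameFamily s s' → sameFamily s' s
  fam_trans : ∀ s s' s'', sameFamily s s' → sameFamily s' s'' → sameFamily s s''
  cap : School → Level → ℕ
  /-- strict preference of each student over schools plus the outside option `none` -/
  pref : Student → Option School → Option School → Prop
  pref_irrefl : ∀ s o, ¬ pref s o o
  pref_trans : ∀ s o₁ o₂ o₃, pref s o₁ o₂ → pref s o₂ o₃ → pref s o₁ o₃
  pref_total : ∀ s o o', o ≠ o' → pref s o o' ∨ pref s o' o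
  nGroups : ℕ
  nGroups_pos : 1 ≤ nGroups
  group : Student → School → ℕ
  group_pos : ∀ s c, 1 ≤ group s c
  group_le : ∀ s c, group s c ≤ nGroups
  /-- random tie-breakers (smaller is better) -/
  tb : Student → School → ℝ
  tb_distinct : ∀ c s s', s ≠ s' → tb s c ≠ tb s' c

attribute [instance] Market.instFinS Market.instDecS Market.instFinC
  Market.instDecC Market.instFinL Market.instDecL

namespace Market

variable (M : Market)

/-- `s` weakly prefers `o` to `o'`. -/
def wPref (s : M.Student) (o o' : Option M.School) : Prop :=
  o = o' ∨ M.pref s o o'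

/-- A feasible matching: every assigned student finds their school acceptable and the
school offers seats at their level, and per-level capacities are respected. -/
def IsMatching (μ : M.Student → Option M.School) : Prop :=
  (∀ s c, μ s = some c → M.pref s (some c) none ∧ 0 < M.cap c (M.level s)) ∧
  (∀ c ℓ, (Finset.univ.filter fun s => μ s = some c ∧ M.level s = ℓ).card ≤ M.cap c ℓ)

/-- Number of students of level `ℓ` assigned to `c`. -/
noncomputable def assignedCount (μ : M.Student → Option M.School) (c : M.School)
    (ℓ : M.Level) : ℕ :=
  (Finset.univ.filter fun s => μ s = some c ∧ M.level s = ℓ).card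

/-- Non-wastefulness. -/
def NonWasteful (μ : M.Student → Option M.School) : Prop :=
  ¬ ∃ s c, M.pref s (some c) (μ s) ∧
    M.assignedCount μ c (M.level s) < M.cap c (M.level s)

/-- Initial priority order at school `c` (groups first, tie-breakers second). -/
def initPrio (c : M.School) (s s' : M.Student) : Prop :=
  M.group s c < M.group s' c ∨ (M.group s c = M.group s' c ∧ M.tb s c < M.tb s' c)

/-- Initial stability. -/
def InitStable (μ : M.Student → Option M.School) : Prop :=
  M.IsMatching μ ∧ M.NonWasteful μ ∧
  ¬ ∃ s s' c, μ s' = some c ∧ M.level s = M.level s' ∧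
      M.pref s (some c) (μ s) ∧ M.initPrio c s s'

/-- Number of students of `s`'s level with strictly higher initial priority at `c`
who weakly prefer `c` to their match. -/
noncomputable def rivalCount (μ : M.Student → Option M.School) (s : M.Student)
    (c : M.School) : ℕ :=
  (Finset.univ.filter fun s'' => M.level s'' = M.level s ∧ M.initPrio c s'' s ∧
    M.wPref s'' (some c) (μ s'')).card

/-- `s` provides contingent priority at `c` (Definition 2, refined). -/
def Provides (μ : M.Student → Option M.School) (s : M.Student) (c : M.School) : Prop :=
  μ s = some c ∧
  (∃ s', s' ≠ s ∧ M.sameFamily s s' ∧ M.wPref s' (some c) (μ s')) ∧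
  M.rivalCount μ s c < M.cap c (M.level s)

/-- `s` is the effective priority provider of their family at `c`: the provider with
the most favorable tie-breaker. -/
def EffProvider (μ : M.Student → Option M.School) (s : M.Student) (c : M.School) : Prop :=
  M.Provides μ s c ∧
  ∀ s', s' ≠ s → M.sameFamily s s' → M.Provides μ s' c → M.tb s c < M.tb s' c

/-- Contingent group under absolute priorities. -/
noncomputable def absGroup (μ : M.Student → Option M.School) (s : M.Student)
    (c : M.School) : ℕ :=
  if M.group s c < M.nGroups ∨
      (M.EffProvider μ s c ∧ ∃ s', s' ≠ s ∧ M.sameFamily s s' ∧ μ s' = some c) ∨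
      (∃ s', s' ≠ s ∧ M.sameFamily s s' ∧ M.EffProvider μ s' c)
  then M.group s c else M.nGroups + 1

/-- Contingent priority order under absolute priorities. -/
noncomputable def absPrio (μ : M.Student → Option M.School) (c : M.School)
    (s s' : M.Student) : Prop :=
  M.absGroup μ s c < M.absGroup μ s' c ∨
  (M.absGroup μ s c = M.absGroup μ s' c ∧ M.tb s c < M.tb s' c)

/-- Contingent stability under absolute priorities. -/
def AbsStable (μ : M.Student → Option M.School) : Prop :=
  M.IsMatching μ ∧ M.NonWasteful μ ∧
  ¬ ∃ s s' c, μ s' = some c ∧ M.level s = M.level s' ∧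
      M.pref s (some c) (μ s) ∧ M.absPrio μ c s s'

/-- Contingent tie-breaker under partial priorities: a no-priority student inherits
their effective provider's tie-breaker when it is more favorable. -/
noncomputable def partialTb (μ : M.Student → Option M.School) (s : M.Student)
    (c : M.School) : ℝ :=
  if h : M.group s c = M.nGroups ∧ ¬ M.EffProvider μ s c ∧
      ∃ s', s' ≠ s ∧ M.sameFamily s s' ∧ M.EffProvider μ s' c ∧ M.tb s' c < M.tb s c
  then M.tb h.2.2.choose c
  else M.tb s c

/-- Contingent priority order under partial priorities: groups unchanged, contingent
tie-breakers first, with residual ties (within a family) broken by the initial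
tie-breakers (the ε-perturbation of Definition 5). -/
noncomputable def partialPrio (μ : M.Student → Option M.School) (c : M.School)
    (s s' : M.Student) : Prop :=
  M.group s c < M.group s' c ∨
  (M.group s c = M.group s' c ∧
    (M.partialTb μ s c < M.partialTb μ s' c ∨
      (M.partialTb μ s c = M.partialTb μ s' c ∧ M.tb s c < M.tb s' c)))

/-- Contingent stability under partial priorities. -/
def PartialStable (μ : M.Student → Option M.School) : Prop :=
  M.IsMatching μ ∧ M.NonWasteful μ ∧
  ¬ ∃ s s' c, μ s' = some c ∧ M.level s = M.level s' ∧
      M.pref s (some c) (μ s) ∧ M.partialPrio μ c s s'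

/-- Tie-breakers are at the family level: members of a family compare the same way
against any student outside the family. -/
def FamilyTB : Prop :=
  ∀ c (s s' a : M.Student), M.sameFamily s s' → ¬ M.sameFamily s a →
    (M.tb s c < M.tb a c ↔ M.tb s' c < M.tb a c)

/-- Size of the family of `s`. -/
noncomputable def famSize (s : M.Student) : ℕ :=
  (Finset.univ.filter fun s' => M.sameFamily s s').card

/-- Number of families in the market. -/
noncomputable def numFamilies : ℕ :=
  (Finset.univ.image fun s : M.Student =>
    Finset.univ.filter fun s' => M.sameFamily s s').card

/-- Rank of an outcome in a student's preference list (`none` gets rank `|≻ₛ|+1`,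
the penalty for being unassigned). -/
noncomputable def rankVal (s : M.Student) (o : Option M.School) : ℕ :=
  (Finset.univ.filter fun c : M.School => M.pref s (some c) o).card + 1

/-- Total rank objective of a matching. -/
noncomputable def cost (μ : M.Student → Option M.School) : ℕ :=
  ∑ s, M.rankVal s (μ s)

/-- Rank-optimal contingent stable matching under absolute priorities. -/
def RankOptAbs (μ : M.Student → Option M.School) : Prop :=
  M.AbsStable μ ∧ ∀ μ', M.AbsStable μ' → M.cost μ ≤ M.cost μ'

/-- Rank-optimal contingent stable matching under partial priorities. -/
def RankOptPartial (μ : M.Student → Option M.School) : Prop :=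
  M.PartialStable μ ∧ ∀ μ', M.PartialStable μ' → M.cost μ ≤ M.cost μ'

end Market

namespace RHFail

/-- levels of the four students -/
def lvl : Fin 4 → Fin 2
  | 0 => 0 | 1 => 1 | 2 => 0 | 3 => 1

/-- preference ranks (smaller is better); columns indexed by Option (Fin 2) -/
def rk : Fin 4 → Option (Fin 2) → ℕ
  | 0, some 0 => 0 | 0, some 1 => 2 | 0, none => 1
  | 1, some 0 => 1 | 1, some 1 => 0 | 1, none => 2
  | 2, some 0 => 0 | 2, some 1 => 1 | 2, none => 2
  | 3, some 0 => 1 | 3, some 1 => 0 | 3, none => 2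

/-- tie-breakers -/
def tbn : Fin 4 → ℕ
  | 0 => 1 | 1 => 0 | 2 => 2 | 3 => 3

lemma tbn_inj : ∀ s s' : Fin 4, tbn s = tbn s' → s = s' := by decide

@[reducible] noncomputable def Mex : Market where
  Student := Fin 4
  School := Fin 2
  Level := Fin 2
  level := lvl
  sameFamily s t := s = t ∨ (2 ≤ s.val ∧ 2 ≤ t.val)
  fam_refl s := Or.inl rfl
  fam_symm := by
    rintro s t (rfl | ⟨h1, h2⟩)
    · exact Or.inl rfl
    · exact Or.inr ⟨h2, h1⟩
  fam_trans := by
    rintro s t u (rfl | ⟨h1, h2⟩) (rfl | ⟨h3, h4⟩)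
    · exact Or.inl rfl
    · exact Or.inr ⟨h3, h4⟩
    · exact Or.inr ⟨h1, h2⟩
    · exact Or.inr ⟨h1, h4⟩
  cap _ _ := 1
  pref s o o' := rk s o < rk s o'
  pref_irrefl s o := lt_irrefl _
  pref_trans s o₁ o₂ o₃ := lt_trans
  pref_total := by decide
  nGroups := 1
  nGroups_pos := le_refl 1
  group _ _ := 1
  group_pos _ _ := le_refl 1
  group_le _ _ := le_refl 1
  tb s _ := (tbn s : ℝ)
  tb_distinct := fun c s s' h hc => h (tbn_inj s s' (Nat.cast_injective hc))

@[simp] lemma level_eq : Mex.level = lvl := rfl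
@[simp] lemma pref_eq : Mex.pref = fun s o o' => rk s o < rk s o' := rfl
@[simp] lemma fam_eq : Mex.sameFamily = fun s t : Fin 4 => s = t ∨ (2 ≤ s.val ∧ 2 ≤ t.val) := rfl
@[simp] lemma cap_eq : Mex.cap = fun _ _ => 1 := rfl
@[simp] lemma group_eq : Mex.group = fun _ _ => 1 := rfl
@[simp] lemma nGroups_eq : Mex.nGroups = 1 := rfl
@[simp] lemma tb_eq : Mex.tb = fun s _ => (tbn s : ℝ) := rfl

noncomputable def μ1 : Fin 4 → Option (Fin 2) := fun s =>
  match s with | 0 => some 0 | 1 => some 0 | 2 => some 1 | 3 => some 1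

noncomputable def μ2 : Fin 4 → Option (Fin 2) := fun s =>
  match s with | 0 => none | 1 => some 1 | 2 => some 0 | 3 => some 0

instance (n : ℕ) [NeZero n] : OfNat Mex.Student n := inferInstanceAs (OfNat (Fin 4) n)
instance (n : ℕ) [NeZero n] : OfNat Mex.School n := inferInstanceAs (OfNat (Fin 2) n)
instance : OfNat Mex.Student 0 := inferInstanceAs (OfNat (Fin 4) 0)
instance : OfNat Mex.School 0 := inferInstanceAs (OfNat (Fin 2) 0)

lemma rival_21_mu1 : Mex.rivalCount μ1 2 1 = 0 := by
  unfold Market.rivalCount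
  rw [Finset.card_eq_zero, Finset.filter_eq_empty_iff]
  intro x _
  simp only [Market.initPrio, Market.wPref, group_eq, tb_eq, level_eq, pref_eq, Nat.cast_lt]
  revert x; decide

lemma rival_30_mu2 : Mex.rivalCount μ2 3 0 = 0 := by
  unfold Market.rivalCount
  rw [Finset.card_eq_zero, Finset.filter_eq_empty_iff]
  intro x _
  simp only [Market.initPrio, Market.wPref, group_eq, tb_eq, level_eq, pref_eq, Nat.cast_lt]
  revert x; decide

lemma rival_20_mu2_pos : 0 < Mex.rivalCount μ2 2 0 := by
  unfold Market.rivalCount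
  apply Finset.card_pos.mpr
  refine ⟨(0 : Fin 4), Finset.mem_filter.mpr ⟨Finset.mem_univ _, ?_, ?_, ?_⟩⟩
  · decide
  · exact Or.inr ⟨rfl, by simp only [tb_eq, Nat.cast_lt]; decide⟩
  · exact Or.inr (by simp only [pref_eq]; decide)

lemma provides_mu1 (s : Fin 4) (c : Fin 2) (h : Mex.Provides μ1 s c) :
    (s = 2 ∧ c = 1) ∨ (s = 3 ∧ c = 1) := by
  obtain ⟨h1, ⟨s', hne, hfam, -⟩, -⟩ := h
  simp only [fam_eq] at hfam
  revert h1 hne hfam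
  revert s c s'
  decide

lemma provides_mu2 (s : Fin 4) (c : Fin 2) (h : Mex.Provides μ2 s c) :
    (s = 2 ∧ c = 0) ∨ (s = 3 ∧ c = 0) := by
  obtain ⟨h1, ⟨s', hne, hfam, -⟩, -⟩ := h
  simp only [fam_eq] at hfam
  revert h1 hne hfam
  revert s c s'
  decide

lemma eff_2_B : Mex.EffProvider μ1 2 1 := by
  constructor
  · refine ⟨rfl, ⟨3, by decide, by simp only [fam_eq]; decide, Or.inl rfl⟩, ?_⟩
    rw [rival_21_mu1]; decide
  · intro s' hne hfam hp
    rcases provides_mu1 _ _ hp with ⟨h2, h3⟩ | ⟨h2, h3⟩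
    · exact absurd h2 hne
    · subst h2; simp only [tb_eq, Nat.cast_lt]; decide

lemma not_prov_2_A : ¬ Mex.Provides μ2 2 0 := by
  intro hp
  have h1 := hp.2.2
  have h2 := rival_20_mu2_pos
  have h3 : Mex.cap 0 (Mex.level 2) = 1 := rfl
  omega

lemma eff_3_A : Mex.EffProvider μ2 3 0 := by
  constructor
  · refine ⟨rfl, ⟨2, by decide, by simp only [fam_eq]; decide, Or.inl rfl⟩, ?_⟩
    rw [rival_30_mu2]; decide
  · intro s' hne hfam hp
    rcases provides_mu2 _ _ hp with ⟨h2, h3⟩ | ⟨h2, h3⟩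
    · subst h2; exact absurd hp not_prov_2_A
    · exact absurd h2 hne

lemma absGroup_mu1 (s : Fin 4) (c : Fin 2) :
    Mex.absGroup μ1 s c = if (s = 2 ∨ s = 3) ∧ c = 1 then 1 else 2 := by
  by_cases h : (s = 2 ∨ s = 3) ∧ c = 1
  · rw [if_pos h]
    obtain ⟨rfl | rfl, rfl⟩ := h
    · unfold Market.absGroup
      rw [if_pos (Or.inr (Or.inl ⟨eff_2_B, 3, by decide, by simp only [fam_eq]; decide, rfl⟩))]
    · unfold Market.absGroup
      rw [if_pos (Or.inr (Or.inr ⟨2, by decide, by simp only [fam_eq]; decide, eff_2_B⟩))]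
  · rw [if_neg h]
    unfold Market.absGroup
    rw [if_neg, nGroups_eq]
    rintro (hg | ⟨he, -⟩ | ⟨s', hne, hfam, he⟩)
    · simp only [group_eq, nGroups_eq] at hg; exact absurd hg (lt_irrefl 1)
    · rcases provides_mu1 _ _ he.1 with ⟨rfl, rfl⟩ | ⟨rfl, rfl⟩
      · exact h ⟨Or.inl rfl, rfl⟩
      · exact h ⟨Or.inr rfl, rfl⟩
    · rcases provides_mu1 _ _ he.1 with ⟨rfl, rfl⟩ | ⟨rfl, rfl⟩ <;>
        (simp only [fam_eq] at hfam; revert hfam hne h; revert s; decide)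

lemma absGroup_mu2 (s : Fin 4) (c : Fin 2) :
    Mex.absGroup μ2 s c = if (s = 2 ∨ s = 3) ∧ c = 0 then 1 else 2 := by
  by_cases h : (s = 2 ∨ s = 3) ∧ c = 0
  · rw [if_pos h]
    obtain ⟨rfl | rfl, rfl⟩ := h
    · unfold Market.absGroup
      rw [if_pos (Or.inr (Or.inr ⟨3, by decide, by simp only [fam_eq]; decide, eff_3_A⟩))]
    · unfold Market.absGroup
      rw [if_pos (Or.inr (Or.inl ⟨eff_3_A, 2, by decide, by simp only [fam_eq]; decide, rfl⟩))]
  · rw [if_neg h]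
    unfold Market.absGroup
    rw [if_neg, nGroups_eq]
    rintro (hg | ⟨he, -⟩ | ⟨s', hne, hfam, he⟩)
    · simp only [group_eq, nGroups_eq] at hg; exact absurd hg (lt_irrefl 1)
    · rcases provides_mu2 _ _ he.1 with ⟨rfl, rfl⟩ | ⟨rfl, rfl⟩
      · exact h ⟨Or.inl rfl, rfl⟩
      · exact h ⟨Or.inr rfl, rfl⟩
    · rcases provides_mu2 _ _ he.1 with ⟨rfl, rfl⟩ | ⟨rfl, rfl⟩ <;>
        (simp only [fam_eq] at hfam; revert hfam hne h; revert s; decide)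

lemma stable_mu1 : Mex.AbsStable μ1 := by
  refine ⟨⟨?_, ?_⟩, ?_, ?_⟩
  · simp only [pref_eq]; decide
  · decide
  · unfold Market.NonWasteful
    simp only [pref_eq]
    decide
  · rintro ⟨s, s', c, h1, h2, h3, h4⟩
    simp only [Market.absPrio, absGroup_mu1, pref_eq, level_eq, tb_eq, Nat.cast_lt]
      at h2 h3 h4
    revert h1 h2 h3 h4
    revert s s' c
    decide

lemma stable_mu2 : Mex.AbsStable μ2 := by
  refine ⟨⟨?_, ?_⟩, ?_, ?_⟩
  · simp only [pref_eq]; decide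
  · decide
  · unfold Market.NonWasteful
    simp only [pref_eq]
    decide
  · rintro ⟨s, s', c, h1, h2, h3, h4⟩
    simp only [Market.absPrio, absGroup_mu2, pref_eq, level_eq, tb_eq, Nat.cast_lt]
      at h2 h3 h4
    revert h1 h2 h3 h4
    revert s s' c
    decide

end RHFail

/-- There is an instance with two contingent stable matchings under
absolute priorities whose sets of matched students have different cardinalities:
the Rural Hospital Theorem fails for contingent stability with absolute priorities. -/
theorem rural_hospital_fails_abs :
    ∃ (M : Market) (μ μ' : M.Student → Option M.School),
      M.AbsStable μ ∧ M.AbsStable μ' ∧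
      (Finset.univ.filter fun s => μ s ≠ none).card ≠
        (Finset.univ.filter fun s => μ' s ≠ none).card := by
  exact ⟨RHFail.Mex, RHFail.μ1, RHFail.μ2, RHFail.stable_mu1, RHFail.stable_mu2, by decide⟩
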